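/- Let k, n ≥ 1 be integers and let 0 ≤ ρ ≤ 1 − 1/(2k). Then for all functions f, g : {−1,1}ⁿ → ℝ, one has 4^{−n} Σ_{x,y ∈ {−1,1}ⁿ} (∏_{i=1}^{n} (1 + ρ xᵢ yᵢ)) · f(x)^{2k} g(y)^{2k} ≥ (2^{−n} Σ_{x} f(x))^{2k} · (2^{−n} Σ_{y} g(y))^{2k}. -/
import Mathlib
set_option maxHeartbeats 1000000



/-- The point of the cube `{−1,1}` encoded by a Boolean. -/
def sgn (b : Bool) : ℝ := if b then 1 else -1

/-- For `k, n ≥ 1`, `0 ≤ ρ ≤ 1 − 1/(2k)`, and all `f, g : {−1,1}ⁿ → ℝ`: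
`4^{−n} Σ_{x,y} (∏ᵢ (1 + ρ xᵢ yᵢ)) f(x)^{2k} g(y)^{2k}
   ≥ (2^{−n} Σₓ f(x))^{2k} · (2^{−n} Σ_y g(y))^{2k}`. -/


lemma choose2 (k : ℕ) : (2*k).choose 2 = k * (2*k-1) := by
  rw [Nat.choose_two_right]
  rcases k with _|k
  · simp
  · ring_nf
    omega

lemma Pbound (k : ℕ) (hk : 1 ≤ k) (s : ℝ) :
    2 + 2*((k:ℝ)*(2*k-1))*s^2 ≤ (1+s)^(2*k) + (1-s)^(2*k) := by
  have h1 : (1+s)^(2*k) = ∑ i ∈ Finset.range (2*k+1), s^i * (Nat.choose (2*k) i : ℝ) := by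
    rw [add_comm]
    rw [add_pow]
    simp
  have h2 : (1-s)^(2*k) = ∑ i ∈ Finset.range (2*k+1), (-s)^i * (Nat.choose (2*k) i : ℝ) := by
    rw [sub_eq_add_neg, add_comm]
    rw [add_pow]
    simp
  rw [h1, h2, ← Finset.sum_add_distrib]
  have hsub : ({0, 2} : Finset ℕ) ⊆ Finset.range (2*k+1) := by
    intro i hi
    simp only [Finset.mem_insert, Finset.mem_singleton] at hi
    rcases hi with rfl | rfl <;> simp <;> omega
  calc 2 + 2*((k:ℝ)*(2*k-1))*s^2
      = ∑ i ∈ ({0,2} : Finset ℕ), (s^i * (Nat.choose (2*k) i : ℝ) + (-s)^i * (Nat.choose (2*k) i : ℝ)) := by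
        rw [Finset.sum_pair (by norm_num)]
        rw [choose2]
        have : ((k * (2*k-1) : ℕ) : ℝ) = (k:ℝ)*(2*(k:ℝ)-1) := by
          push_cast [Nat.cast_sub (by omega : 1 ≤ 2*k)]
          ring
        simp [this]
        ring
    _ ≤ _ := by
        apply Finset.sum_le_sum_of_subset_of_nonneg hsub
        intro i _ _
        rcases Nat.even_or_odd i with he | ho
        · have : (-s)^i = s^i := he.neg_pow s
          rw [this]
          have : (0:ℝ) ≤ s^i := he.pow_nonneg s
          positivity
        · have : (-s)^i = -(s^i) := ho.neg_pow s
          rw [this]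
          ring_nf
          positivity



lemma arith (ρ c P Q QB M R : ℝ) (hρ0 : 0 ≤ ρ) (hρc : ρ ≤ 1 - c) (hc0 : 0 < c) (hc1 : c ≤ 1)
    (hPR : P^2 - R^2 = Q) (hQB : QB ≤ Q) (hM1 : 1 ≤ M) (hPM : M ≤ P)
    (h3 : 1 ≤ c*M^2 + (1-c)*QB) :
    ρ * R^2 ≤ P^2 - 1 := by
  have hR2 : 0 ≤ R^2 := sq_nonneg R
  have hM2P : M^2 ≤ P^2 := by nlinarith
  have e1 : 0 ≤ (1 - ρ - c) * R^2 := mul_nonneg (by linarith) hR2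
  have e2 : 0 ≤ c * (P^2 - M^2) := mul_nonneg hc0.le (by linarith)
  have e3 : 0 ≤ (1-c) * (Q - QB) := mul_nonneg (by linarith) (by linarith)
  nlinarith [e1, e2, e3, h3, hPR]

lemma keyA (k : ℕ) (hk : 1 ≤ k) (ρ s : ℝ) (hρ0 : 0 ≤ ρ) (hρ1 : ρ ≤ 1 - 1/(2*(k:ℝ)))
    (hs : s^2 ≤ 1) :
    ρ * (((1+s)^(2*k) - (1-s)^(2*k))/2)^2 ≤ (((1+s)^(2*k) + (1-s)^(2*k))/2)^2 - 1 := by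
  have hk0 : (0:ℝ) < 2*(k:ℝ) := by
    have : (1:ℝ) ≤ (k:ℝ) := by exact_mod_cast hk
    linarith
  have hkR : (1:ℝ) ≤ (k:ℝ) := by exact_mod_cast hk
  have hs0 : 0 ≤ 1 - s^2 := by linarith
  apply arith (c := 1/(2*(k:ℝ))) (Q := (1-s^2)^(2*k)) (QB := 1 - 2*(k:ℝ)*s^2)
      (M := 1 + (k:ℝ)*(2*(k:ℝ)-1)*s^2)
  · exact hρ0
  · exact hρ1
  · positivity
  · rw [div_le_one hk0]; linarith
  · have hab : (1+s)^(2*k) * ((1-s)^(2*k)) = (1-s^2)^(2*k) := by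
      rw [← mul_pow]; ring_nf
    nlinarith [hab]
  · have := one_add_mul_le_pow (a := -s^2) (by linarith) (2*k)
    push_cast at this
    calc 1 - 2*(k:ℝ)*s^2 = 1 + (2*(k:ℝ))*(-s^2) := by ring
      _ ≤ (1 + -s^2)^(2*k) := this
      _ = (1 - s^2)^(2*k) := by ring_nf
  · have h1 : (0:ℝ) ≤ (k:ℝ)*(2*(k:ℝ)-1) := by nlinarith
    have h2 : (0:ℝ) ≤ (k:ℝ)*(2*(k:ℝ)-1)*s^2 := mul_nonneg h1 (sq_nonneg s)
    linarith
  · have := Pbound k hk s; linarith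
  · have key : (1/(2*(k:ℝ)))*(1 + (k:ℝ)*(2*(k:ℝ)-1)*s^2)^2 + (1-1/(2*(k:ℝ)))*(1 - 2*(k:ℝ)*s^2) - 1
        = (1/(2*(k:ℝ))) * ((k:ℝ)*(2*(k:ℝ)-1))^2 * s^4 := by
      field_simp
      ring
    have pos : (0:ℝ) ≤ (1/(2*(k:ℝ))) * ((k:ℝ)*(2*(k:ℝ)-1))^2 * s^4 := by positivity
    linarith [key, pos]


lemma cs (ρ X Y x y : ℝ) (hρ0 : 0 ≤ ρ) (hX : 1 ≤ X) (hY : 1 ≤ Y)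
    (h1 : ρ*x^2 ≤ X^2-1) (h2 : ρ*y^2 ≤ Y^2-1) : 1 ≤ X*Y + ρ*(x*y) := by
  have hXY : 1 ≤ X*Y := by nlinarith
  have h12 : (ρ*x^2)*(ρ*y^2) ≤ (X^2-1)*(Y^2-1) :=
    mul_le_mul h1 h2 (mul_nonneg hρ0 (sq_nonneg y)) (by nlinarith)
  nlinarith [h12, sq_nonneg (X-Y), sq_nonneg (X*Y-1+ρ*(x*y)), hXY]





lemma twoPointNN (k : ℕ) (hk : 1 ≤ k) (ρ : ℝ) (hρ0 : 0 ≤ ρ) (hρ1 : ρ ≤ 1 - 1/(2*(k:ℝ)))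
    (A B C D : ℝ) (hA : 0 ≤ A) (hB : 0 ≤ B) (hC : 0 ≤ C) (hD : 0 ≤ D) :
    ((A+B)/2)^(2*k) * ((C+D)/2)^(2*k) ≤
      (1/4)*((1+ρ)*(A^(2*k)*C^(2*k)) + (1-ρ)*(A^(2*k)*D^(2*k))
        + (1-ρ)*(B^(2*k)*C^(2*k)) + (1+ρ)*(B^(2*k)*D^(2*k))) := by
  have hkR : (1:ℝ) ≤ (k:ℝ) := by exact_mod_cast hk
  have hρle1 : ρ ≤ 1 := by
    have : 0 < 1/(2*(k:ℝ)) := by positivity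
    linarith
  have hk2 : 2*k ≠ 0 := by omega
  have rhsnn : 0 ≤ (1/4)*((1+ρ)*(A^(2*k)*C^(2*k)) + (1-ρ)*(A^(2*k)*D^(2*k))
        + (1-ρ)*(B^(2*k)*C^(2*k)) + (1+ρ)*(B^(2*k)*D^(2*k))) := by
    have h1 : (0:ℝ) ≤ 1+ρ := by linarith
    have h2 : (0:ℝ) ≤ 1-ρ := by linarith
    positivity
  rcases eq_or_lt_of_le (by linarith : (0:ℝ) ≤ A+B) with hAB | hAB
  · have hA0 : A = 0 := by linarith
    have hB0 : B = 0 := by linarith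
    rw [hA0, hB0]
    simpa [zero_pow hk2] using rhsnn
  rcases eq_or_lt_of_le (by linarith : (0:ℝ) ≤ C+D) with hCD | hCD
  · have hC0 : C = 0 := by linarith
    have hD0 : D = 0 := by linarith
    rw [hC0, hD0]
    simpa [zero_pow hk2] using rhsnn
  set u := (A+B)/2 with hu
  set w := (C+D)/2 with hw
  set s := (A-B)/(A+B) with hs
  set t := (C-D)/(C+D) with ht
  have hABne : A+B ≠ 0 := ne_of_gt hAB
  have hCDne : C+D ≠ 0 := ne_of_gt hCD
  have hAe : A = u*(1+s) := by rw [hu, hs]; field_simp; ring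
  have hBe : B = u*(1-s) := by rw [hu, hs]; field_simp; ring
  have hCe : C = w*(1+t) := by rw [hw, ht]; field_simp; ring
  have hDe : D = w*(1-t) := by rw [hw, ht]; field_simp; ring
  have hs2 : s^2 ≤ 1 := by
    rw [hs, div_pow, div_le_one (by positivity)]
    nlinarith [mul_nonneg hA hB]
  have ht2 : t^2 ≤ 1 := by
    rw [ht, div_pow, div_le_one (by positivity)]
    nlinarith [mul_nonneg hC hD]
  set Ps := ((1+s)^(2*k) + (1-s)^(2*k))/2 with hPs
  set Rs := ((1+s)^(2*k) - (1-s)^(2*k))/2 with hRs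
  set Pt := ((1+t)^(2*k) + (1-t)^(2*k))/2 with hPt
  set Rt := ((1+t)^(2*k) - (1-t)^(2*k))/2 with hRt
  have hPs1 : 1 ≤ Ps := by
    have := Pbound k hk s
    have h0 : (0:ℝ) ≤ (k:ℝ)*(2*(k:ℝ)-1) := by nlinarith
    have := mul_nonneg h0 (sq_nonneg s)
    rw [hPs]; linarith
  have hPt1 : 1 ≤ Pt := by
    have := Pbound k hk t
    have h0 : (0:ℝ) ≤ (k:ℝ)*(2*(k:ℝ)-1) := by nlinarith
    have := mul_nonneg h0 (sq_nonneg t)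
    rw [hPt]; linarith
  have key : 1 ≤ Ps*Pt + ρ*(Rs*Rt) :=
    cs ρ Ps Pt Rs Rt hρ0 hPs1 hPt1 (keyA k hk ρ s hρ0 hρ1 hs2) (keyA k hk ρ t hρ0 hρ1 ht2)
  have hU : (0:ℝ) ≤ u^(2*k) * w^(2*k) := by positivity
  calc ((A+B)/2)^(2*k) * ((C+D)/2)^(2*k) = u^(2*k) * w^(2*k) * 1 := by rw [hu, hw]; ring
    _ ≤ u^(2*k) * w^(2*k) * (Ps*Pt + ρ*(Rs*Rt)) := by
        exact mul_le_mul_of_nonneg_left key hU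
    _ = (1/4)*((1+ρ)*(A^(2*k)*C^(2*k)) + (1-ρ)*(A^(2*k)*D^(2*k))
        + (1-ρ)*(B^(2*k)*C^(2*k)) + (1+ρ)*(B^(2*k)*D^(2*k))) := by
        rw [hAe, hBe, hCe, hDe, hPs, hRs, hPt, hRt]
        simp only [mul_pow]
        ring

lemma twoPoint (k : ℕ) (hk : 1 ≤ k) (ρ : ℝ) (hρ0 : 0 ≤ ρ) (hρ1 : ρ ≤ 1 - 1/(2*(k:ℝ)))
    (A B C D : ℝ) :
    ((A+B)/2)^(2*k) * ((C+D)/2)^(2*k) ≤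
      (1/4)*((1+ρ)*(A^(2*k)*C^(2*k)) + (1-ρ)*(A^(2*k)*D^(2*k))
        + (1-ρ)*(B^(2*k)*C^(2*k)) + (1+ρ)*(B^(2*k)*D^(2*k))) := by
  have hev : Even (2*k) := even_two_mul k
  have habs : ∀ X : ℝ, X^(2*k) = |X|^(2*k) := fun X => (hev.pow_abs X).symm
  calc ((A+B)/2)^(2*k) * ((C+D)/2)^(2*k)
      ≤ ((|A|+|B|)/2)^(2*k) * ((|C|+|D|)/2)^(2*k) := by
        apply mul_le_mul
        · rw [habs ((A+B)/2)]
          apply pow_le_pow_left₀ (abs_nonneg _)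
          rw [abs_div]
          simp only [abs_two]
          apply div_le_div_of_nonneg_right ?_ (by norm_num)
          exact abs_add_le A B
        · rw [habs ((C+D)/2)]
          apply pow_le_pow_left₀ (abs_nonneg _)
          rw [abs_div]
          simp only [abs_two]
          apply div_le_div_of_nonneg_right ?_ (by norm_num)
          exact abs_add_le C D
        · rw [habs ((C+D)/2)]; positivity
        · positivity
    _ ≤ (1/4)*((1+ρ)*(|A|^(2*k)*|C|^(2*k)) + (1-ρ)*(|A|^(2*k)*|D|^(2*k))
        + (1-ρ)*(|B|^(2*k)*|C|^(2*k)) + (1+ρ)*(|B|^(2*k)*|D|^(2*k))) :=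
        twoPointNN k hk ρ hρ0 hρ1 |A| |B| |C| |D|
          (abs_nonneg A) (abs_nonneg B) (abs_nonneg C) (abs_nonneg D)
    _ = (1/4)*((1+ρ)*(A^(2*k)*C^(2*k)) + (1-ρ)*(A^(2*k)*D^(2*k))
        + (1-ρ)*(B^(2*k)*C^(2*k)) + (1+ρ)*(B^(2*k)*D^(2*k))) := by
        simp only [hev.pow_abs]




lemma sum_split (n : ℕ) (h : (Fin (n+1) → Bool) → ℝ) :
    ∑ x : Fin (n+1) → Bool, h x = ∑ b : Bool, ∑ x : Fin n → Bool, h (Fin.cons b x) := by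
  rw [← (Fin.consEquiv (fun _ => Bool)).sum_comp h, Fintype.sum_prod_type]
  rfl

lemma main (k : ℕ) (hk : 1 ≤ k) (ρ : ℝ) (hρ0 : 0 ≤ ρ) (hρ1 : ρ ≤ 1 - 1/(2*(k:ℝ))) :
    ∀ (n : ℕ) (f g : (Fin n → Bool) → ℝ),
    (((2:ℝ)^n)⁻¹ * ∑ x : Fin n → Bool, f x)^(2*k) *
        (((2:ℝ)^n)⁻¹ * ∑ y : Fin n → Bool, g y)^(2*k)
      ≤ ((4:ℝ)^n)⁻¹ * ∑ x : Fin n → Bool, ∑ y : Fin n → Bool,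
          (∏ i, (1 + ρ * sgn (x i) * sgn (y i))) * f x ^ (2*k) * g y ^ (2*k) := by
  have hρle1 : ρ ≤ 1 := by
    have hkR : (1:ℝ) ≤ (k:ℝ) := by exact_mod_cast hk
    have : 0 < 1/(2*(k:ℝ)) := by positivity
    linarith
  have hW : ∀ b c : Bool, 0 ≤ 1 + ρ * sgn b * sgn c := by
    intro b c
    cases b <;> cases c <;> simp [sgn] <;> linarith
  intro n
  induction n with
  | zero =>
    intro f g
    simp only [pow_zero, inv_one, one_mul]
    rw [Fintype.sum_unique, Fintype.sum_unique, Fintype.sum_unique, Fintype.sum_unique]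
    simp
  | succ n ih =>
    intro f g
    set F : Bool → ℝ := fun b => ((2:ℝ)^n)⁻¹ * ∑ x : Fin n → Bool, f (Fin.cons b x) with hF
    set G : Bool → ℝ := fun c => ((2:ℝ)^n)⁻¹ * ∑ y : Fin n → Bool, g (Fin.cons c y) with hG
    set T : Bool → Bool → ℝ := fun b c => ∑ x : Fin n → Bool, ∑ y : Fin n → Bool,
        (∏ i, (1 + ρ * sgn (x i) * sgn (y i))) * f (Fin.cons b x) ^ (2*k) * g (Fin.cons c y) ^ (2*k)
      with hT
    have h2n : ((2:ℝ)^n) ≠ 0 := by positivity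
    have hsumf : ((2:ℝ)^(n+1))⁻¹ * ∑ x : Fin (n+1) → Bool, f x = (F true + F false)/2 := by
      rw [sum_split n f, Fintype.sum_bool, hF, pow_succ]
      field_simp
    have hsumg : ((2:ℝ)^(n+1))⁻¹ * ∑ y : Fin (n+1) → Bool, g y = (G true + G false)/2 := by
      rw [sum_split n g, Fintype.sum_bool, hG, pow_succ]
      field_simp
    -- inner expansion of the y-sum
    have e1 : ∀ (b : Bool) (x' : Fin n → Bool),
        (∑ y : Fin (n+1) → Bool,
          (∏ i, (1 + ρ * sgn ((Fin.cons b x' : Fin (n+1) → Bool) i) * sgn (y i))) * f (Fin.cons b x' : Fin (n+1) → Bool) ^ (2*k) * g y ^ (2*k))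
        = ∑ c : Bool, ∑ y' : Fin n → Bool,
            ((1 + ρ * sgn b * sgn c) * ∏ i, (1 + ρ * sgn (x' i) * sgn (y' i)))
              * f (Fin.cons b x' : Fin (n+1) → Bool) ^ (2*k) * g (Fin.cons c y' : Fin (n+1) → Bool) ^ (2*k) := by
      intro b x'
      rw [sum_split n]
      apply Finset.sum_congr rfl; intro c _
      apply Finset.sum_congr rfl; intro y' _
      rw [Fin.prod_univ_succ]
      simp only [Fin.cons_zero, Fin.cons_succ]
    have E : ((4:ℝ)^(n+1))⁻¹ * ∑ x : Fin (n+1) → Bool, ∑ y : Fin (n+1) → Bool,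
          (∏ i, (1 + ρ * sgn (x i) * sgn (y i))) * f x ^ (2*k) * g y ^ (2*k)
        = (1/4) * ∑ b : Bool, ∑ c : Bool, (1 + ρ * sgn b * sgn c) * (((4:ℝ)^n)⁻¹ * T b c) := by
      rw [sum_split n]
      have step : (∑ b : Bool, ∑ x' : Fin n → Bool, ∑ y : Fin (n+1) → Bool,
            (∏ i, (1 + ρ * sgn ((Fin.cons b x' : Fin (n+1) → Bool) i) * sgn (y i))) * f (Fin.cons b x' : Fin (n+1) → Bool) ^ (2*k) * g y ^ (2*k))
          = ∑ b : Bool, ∑ c : Bool, (1 + ρ * sgn b * sgn c) * T b c := by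
        apply Finset.sum_congr rfl; intro b _
        rw [show (∑ x' : Fin n → Bool, ∑ y : Fin (n+1) → Bool,
            (∏ i, (1 + ρ * sgn ((Fin.cons b x' : Fin (n+1) → Bool) i) * sgn (y i))) * f (Fin.cons b x' : Fin (n+1) → Bool) ^ (2*k) * g y ^ (2*k))
          = ∑ x' : Fin n → Bool, ∑ c : Bool, ∑ y' : Fin n → Bool,
            ((1 + ρ * sgn b * sgn c) * ∏ i, (1 + ρ * sgn (x' i) * sgn (y' i)))
              * f (Fin.cons b x' : Fin (n+1) → Bool) ^ (2*k) * g (Fin.cons c y' : Fin (n+1) → Bool) ^ (2*k)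
          from Finset.sum_congr rfl (fun x' _ => e1 b x')]
        rw [Finset.sum_comm]
        apply Finset.sum_congr rfl; intro c _
        rw [hT, Finset.mul_sum]
        apply Finset.sum_congr rfl; intro x' _
        rw [Finset.mul_sum]
        apply Finset.sum_congr rfl; intro y' _
        ring
      rw [step, Finset.mul_sum, Finset.mul_sum]
      apply Finset.sum_congr rfl; intro b _
      rw [Finset.mul_sum, Finset.mul_sum]
      apply Finset.sum_congr rfl; intro c _
      rw [pow_succ, mul_inv]
      ring
    rw [hsumf, hsumg, E]
    have key1 : ∀ b c : Bool, (1 + ρ * sgn b * sgn c) * (F b ^(2*k) * G c ^(2*k))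
        ≤ (1 + ρ * sgn b * sgn c) * (((4:ℝ)^n)⁻¹ * T b c) := by
      intro b c
      apply mul_le_mul_of_nonneg_left _ (hW b c)
      exact ih (fun x => f (Fin.cons b x)) (fun y => g (Fin.cons c y))
    calc ((F true + F false)/2)^(2*k) * ((G true + G false)/2)^(2*k)
        ≤ (1/4)*((1+ρ)*(F true^(2*k)*G true^(2*k)) + (1-ρ)*(F true^(2*k)*G false^(2*k))
          + (1-ρ)*(F false^(2*k)*G true^(2*k)) + (1+ρ)*(F false^(2*k)*G false^(2*k))) :=
          twoPoint k hk ρ hρ0 hρ1 (F true) (F false) (G true) (G false)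
      _ = (1/4) * ∑ b : Bool, ∑ c : Bool, (1 + ρ * sgn b * sgn c) * (F b ^(2*k) * G c ^(2*k)) := by
          simp only [Fintype.sum_bool, sgn]
          norm_num
          ring
      _ ≤ (1/4) * ∑ b : Bool, ∑ c : Bool, (1 + ρ * sgn b * sgn c) * (((4:ℝ)^n)⁻¹ * T b c) := by
          apply mul_le_mul_of_nonneg_left _ (by norm_num)
          apply Finset.sum_le_sum; intro b _
          apply Finset.sum_le_sum; intro c _
          exact key1 b c

theorem stmt_5 (k n : ℕ) (hk : 1 ≤ k) (hn : 1 ≤ n) (ρ : ℝ)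
    (hρ0 : 0 ≤ ρ) (hρ1 : ρ ≤ 1 - 1/(2*(k:ℝ)))
    (f g : (Fin n → Bool) → ℝ) :
    (((2:ℝ)^n)⁻¹ * ∑ x : Fin n → Bool, f x)^(2*k) *
        (((2:ℝ)^n)⁻¹ * ∑ y : Fin n → Bool, g y)^(2*k)
      ≤ ((4:ℝ)^n)⁻¹ * ∑ x : Fin n → Bool, ∑ y : Fin n → Bool,
          (∏ i, (1 + ρ * sgn (x i) * sgn (y i))) * f x ^ (2*k) * g y ^ (2*k) := by
  exact main k hk ρ hρ0 hρ1 n f g
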